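/- Let (X, μ) be a probability space, let f : X × X → [0,1] be measurable, and suppose c ∈ [0,1] satisfies ∫_X (1 − f(x,y)) dμ(y) ≤ c for every x ∈ X. Let G=(V,E) be a finite simple graph with a fixed total order on E and let T ⊆ E be a subset forming a tree with vertex set V(T) and broken edge set E_T (relative to the induced subgraph G[V(T)]). Then |∫_{X^{V(T)}} ∏_{uv∈T} (1 − f(x_u,x_v)) · ∏_{st∈E_T} f(x_s,x_t) dμ^{V(T)}| ≤ c^{|T|}, where |T| is the number of edges of T. -/

import Mathlib

open MeasureTheory

attribute [local instance] Classical.propDecidable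

namespace VolumePaper

variable {V : Type} [Fintype V]

/-- The set of endpoints of a finite set of (potential) edges. -/
noncomputable def verts (T : Finset (Sym2 V)) : Finset V :=
  Finset.univ.filter (fun v => ∃ e ∈ T, v ∈ e)

/-- `T` forms a tree (necessarily with at least one edge): the graph on the set of
endpoints of `T` whose edges are the members of `T` is a tree. -/
def IsTreeSet (T : Finset (Sym2 V)) : Prop :=
  (SimpleGraph.induce (↑(verts T) : Set V)
    (SimpleGraph.fromEdgeSet (↑T : Set (Sym2 V)))).IsTree

/-- The broken edges of `T` relative to the induced subgraph `G[S]` and a fixed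
total edge order (given by an injective function `ord` into `ℕ`): edges `e` of `G[S]`
not in `T` such that `e` is the largest edge of a (the) cycle of `T ∪ {e}`. -/
noncomputable def brokenEdgesOn (G : SimpleGraph V) (ord : Sym2 V → ℕ) (S : Finset V)
    (T : Finset (Sym2 V)) : Finset (Sym2 V) :=
  Finset.univ.filter (fun e =>
    e ∈ G.edgeSet ∧ (∀ v ∈ e, v ∈ S) ∧ e ∉ T ∧
    ∃ (u : V) (c : (SimpleGraph.fromEdgeSet (insert e (↑T : Set (Sym2 V)))).Walk u u),
      c.IsCycle ∧ e ∈ c.edges ∧ ∀ e' ∈ c.edges, ord e' ≤ ord e)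

/-- The broken edges of a tree `T`, relative to the graph induced by `G` on the
endpoints of `T`. -/
noncomputable def brokenEdges (G : SimpleGraph V) (ord : Sym2 V → ℕ)
    (T : Finset (Sym2 V)) : Finset (Sym2 V) :=
  brokenEdgesOn G ord (verts T) T

/-- Indicator (as a real number) of the event `x_u + x_v > 1` on an unordered pair. -/
noncomputable def indGt (x : V → ℝ) : Sym2 V → ℝ :=
  Sym2.lift ⟨fun u v => if 1 < x u + x v then 1 else 0, by intro a b; dsimp only; rw [add_comm]⟩

/-- Indicator (as a real number) of the event `x_u + x_v ≤ 1` on an unordered pair. -/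
noncomputable def indLe (x : V → ℝ) : Sym2 V → ℝ :=
  Sym2.lift ⟨fun u v => if x u + x v ≤ 1 then 1 else 0, by intro a b; dsimp only; rw [add_comm]⟩

/-- Extension of a function on a finite subset of coordinates by `0`. -/
noncomputable def extFun (S : Finset V) (x : {v // v ∈ S} → ℝ) : V → ℝ :=
  fun v => if h : v ∈ S then x ⟨v, h⟩ else 0

/-- The integral `∫_{[0,1/2+δ]^S} ∏_{uv ∈ T} 1[x_u+x_v>1] ∏_{st ∈ E_T} 1[x_s+x_t ≤ 1] dμ`,
where `E_T` is the set of broken edges of `T` relative to `G[S]`. -/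
noncomputable def treeIntegral (G : SimpleGraph V) (ord : Sym2 V → ℕ) (δ : ℝ)
    (S : Finset V) (T : Finset (Sym2 V)) : ℝ :=
  ∫ x : {v // v ∈ S} → ℝ in Set.univ.pi (fun _ => Set.Icc (0:ℝ) (1/2 + δ)),
    (∏ e ∈ T, indGt (extFun S x) e) * ∏ e ∈ brokenEdgesOn G ord S T, indLe (extFun S x) e

/-- The weight `w_T` of a tree `T` of edges of `G`. -/
noncomputable def treeWeight (G : SimpleGraph V) (ord : Sym2 V → ℕ) (δ : ℝ)
    (T : Finset (Sym2 V)) : ℝ :=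
  (1/2 + δ) ^ (-((verts T).card : ℤ)) * (-1 : ℝ) ^ T.card *
    treeIntegral G ord δ (verts T) T

/-- The connected components (each having at least one edge) of a set `F` of edges. -/
noncomputable def comps (F : Finset (Sym2 V)) : Finset (Finset (Sym2 V)) :=
  F.image (fun e => F.filter (fun e' => ∃ u ∈ e, ∃ v ∈ e',
    (SimpleGraph.fromEdgeSet (↑F : Set (Sym2 V))).Reachable u v))

/-- `F` is a forest of edges of `G` all of whose endpoints lie in `S`. -/
def IsForestOn (G : SimpleGraph V) (S : Finset V) (F : Finset (Sym2 V)) : Prop :=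
  (↑F : Set (Sym2 V)) ⊆ G.edgeSet ∧ (∀ e ∈ F, ∀ v ∈ e, v ∈ S) ∧
    (SimpleGraph.fromEdgeSet (↑F : Set (Sym2 V))).IsAcyclic

/-- The polynomial `p_{G[S],δ}(x) = ∑_{F forest of G[S]} (∏_{T comp. of F} w_T) x^{|F|}`
(with weights computed in `G`). -/
noncomputable def pPolyOn (G : SimpleGraph V) (ord : Sym2 V → ℕ) (δ : ℝ) (S : Finset V) :
    Polynomial ℂ :=
  ∑ F ∈ Finset.univ.filter (fun F => IsForestOn G S F),
    Polynomial.monomial F.card (((∏ T ∈ comps F, treeWeight G ord δ T : ℝ)) : ℂ)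

/-- The polynomial `p_{G,δ}`. -/
noncomputable def pPoly (G : SimpleGraph V) (ord : Sym2 V → ℕ) (δ : ℝ) : Polynomial ℂ :=
  pPolyOn G ord δ Finset.univ

/-- `T` is (the edge set of) a spanning tree of the induced subgraph `G[S]`. -/
def IsSpanningTreeOn (G : SimpleGraph V) (S : Finset V) (T : Finset (Sym2 V)) : Prop :=
  (↑T : Set (Sym2 V)) ⊆ G.edgeSet ∧ (∀ e ∈ T, ∀ v ∈ e, v ∈ S) ∧
    (SimpleGraph.induce (↑S : Set V)
      (SimpleGraph.fromEdgeSet (↑T : Set (Sym2 V)))).IsTree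

/-- The weight `w(G[S])` of the subgraph of `G` induced by `S`. -/
noncomputable def indWeight (G : SimpleGraph V) (ord : Sym2 V → ℕ) (δ : ℝ)
    (S : Finset V) : ℝ :=
  ∑ T ∈ Finset.univ.filter (fun T => IsSpanningTreeOn G S T),
    (1/2 + δ) ^ (-(S.card : ℤ)) * (-1 : ℝ) ^ T.card * treeIntegral G ord δ S T

/-- `G` has maximum degree at most `Δ`. -/
def maxDegreeLE (G : SimpleGraph V) (Δ : ℝ) : Prop :=
  ∀ v : V, ((Finset.univ.filter (fun u => G.Adj v u)).card : ℝ) ≤ Δ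

/-- The truncated relaxed independent set polytope `P_{G,δ}`. -/
def polytope (G : SimpleGraph V) (δ : ℝ) : Set (V → ℝ) :=
  {x | (∀ v, x v ∈ Set.Icc (0:ℝ) (1/2 + δ)) ∧ ∀ ⦃u v⦄, G.Adj u v → x u + x v ≤ 1}


/-- Evaluation of a symmetric two-variable function on an unordered pair of vertices,
via a configuration `y` indexed by a finite vertex subset (junk value `0` off `S`). -/
noncomputable def pairApply {X : Type} (S : Finset V) (g : X → X → ℝ)
    (hg : ∀ a b, g a b = g b a) (y : {v // v ∈ S} → X) : Sym2 V → ℝ :=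
  Sym2.lift ⟨fun u v =>
      if hu : u ∈ S then (if hv : v ∈ S then g (y ⟨u, hu⟩) (y ⟨v, hv⟩) else 0) else 0,
    by
      intro a b
      dsimp only
      by_cases ha : a ∈ S <;> by_cases hb : b ∈ S <;> simp [ha, hb, hg]⟩

section AuxCombinatorics

open scoped ENNReal

lemma isAcyclic_anti {W : Type} {H H' : SimpleGraph W} (h : H ≤ H') (hac : H'.IsAcyclic) :
    H.IsAcyclic := fun _ c hc => hac (c.mapLe h) (hc.mapLe h)

lemma induce_mono_right {W : Type} (s : Set W) {H H' : SimpleGraph W} (h : H ≤ H') :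
    SimpleGraph.induce s H ≤ SimpleGraph.induce s H' := by
  intro a b hab
  exact h hab

lemma exists_leaf {W : Type} [Fintype W] {H : SimpleGraph W} (hac : H.IsAcyclic)
    {a b : W} (hab : H.Adj a b) : ∃ u s, H.Adj u s ∧ ∀ y, H.Adj u y → y = s := by
  classical
  set P : ℕ → Prop := fun n => ∃ (u w : W) (p : H.Walk u w), p.IsPath ∧ p.length = n with hP
  have h1 : P 1 := by
    refine ⟨a, b, SimpleGraph.Walk.cons hab SimpleGraph.Walk.nil, ?_, by simp⟩
    rw [SimpleGraph.Walk.cons_isPath_iff]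
    simp [hab.ne]
  have hlt : ∀ n, P n → n < Fintype.card W := by
    rintro n ⟨u, w, p, hp, rfl⟩
    exact hp.length_lt
  set N := Fintype.card W with hN
  have h1N : 1 ≤ N := le_of_lt (hlt 1 h1)
  have hspec : P (Nat.findGreatest P N) := Nat.findGreatest_spec h1N h1
  have hn1 : 1 ≤ Nat.findGreatest P N := Nat.le_findGreatest h1N h1
  have hmax : ¬ P (Nat.findGreatest P N + 1) := fun hp1 =>
    Nat.findGreatest_is_greatest (Nat.lt_succ_self _) (le_of_lt (hlt _ hp1)) hp1
  obtain ⟨u, w, p, hp, hlen⟩ := hspec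
  obtain ⟨v1, h, q, rfl⟩ : ∃ (v1 : W) (h : H.Adj u v1) (q : H.Walk v1 w),
      p = SimpleGraph.Walk.cons h q := by
    cases p with
    | nil => simp only [SimpleGraph.Walk.length_nil] at hlen; omega
    | cons h q => exact ⟨_, h, q, rfl⟩
  have hq := (SimpleGraph.Walk.cons_isPath_iff h q).mp hp
  refine ⟨u, v1, h, fun y hy => ?_⟩
  by_cases hyv : y = v1
  · exact hyv
  exfalso
  by_cases hys : y ∈ (SimpleGraph.Walk.cons h q).support
  · have hrp : ((SimpleGraph.Walk.cons h q).takeUntil y hys).IsPath := hp.takeUntil hys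
    have hecyc : (SimpleGraph.Walk.cons hy.symm
        ((SimpleGraph.Walk.cons h q).takeUntil y hys)).IsCycle := by
      rw [SimpleGraph.Walk.cons_isCycle_iff]
      refine ⟨hrp, fun hmem => ?_⟩
      have hmem' : s(u, y) ∈ (SimpleGraph.Walk.cons h q).edges :=
        SimpleGraph.Walk.edges_takeUntil_subset _ hys (by rwa [Sym2.eq_swap] at hmem)
      rw [SimpleGraph.Walk.edges_cons] at hmem'
      rcases List.mem_cons.mp hmem' with h1 | h2
      · rcases Sym2.eq_iff.mp h1 with ⟨-, hyv1⟩ | ⟨huv1, -⟩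
        · exact hyv hyv1
        · exact h.ne huv1
      · exact hq.2 (SimpleGraph.Walk.fst_mem_support_of_mem_edges q h2)
    exact hac _ hecyc
  · apply hmax
    refine ⟨y, w, SimpleGraph.Walk.cons hy.symm (SimpleGraph.Walk.cons h q), ?_, ?_⟩
    · rw [SimpleGraph.Walk.cons_isPath_iff]
      exact ⟨hp, hys⟩
    · simp only [SimpleGraph.Walk.length_cons] at hlen ⊢
      omega

lemma exists_leaf_edge {W : Type} [Fintype W] (S : Finset W) {T : Finset (Sym2 W)}
    (hac : (SimpleGraph.induce (↑S : Set W)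
      (SimpleGraph.fromEdgeSet (↑T : Set (Sym2 W)))).IsAcyclic)
    (hdiag : ∀ e ∈ T, ¬ e.IsDiag) (hS : ∀ e ∈ T, ∀ w ∈ e, w ∈ S) (hne : T.Nonempty) :
    ∃ v s : W, v ≠ s ∧ s(v, s) ∈ T ∧ ∀ e ∈ T, v ∈ e → e = s(v, s) := by
  classical
  obtain ⟨e₀, he₀⟩ := hne
  revert he₀
  induction e₀ using Sym2.ind with
  | _ a b =>
  intro hab
  have hne' : a ≠ b := fun hh => hdiag _ hab (by rw [hh]; exact Sym2.mk_isDiag_iff.mpr rfl)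
  have haS : a ∈ S := hS _ hab a (Sym2.mem_mk_left a b)
  have hbS : b ∈ S := hS _ hab b (Sym2.mem_mk_right a b)
  have hadj : (SimpleGraph.induce (↑S : Set W)
      (SimpleGraph.fromEdgeSet (↑T : Set (Sym2 W)))).Adj ⟨a, haS⟩ ⟨b, hbS⟩ := by
    show (SimpleGraph.fromEdgeSet (↑T : Set (Sym2 W))).Adj a b
    rw [SimpleGraph.fromEdgeSet_adj]
    exact ⟨hab, hne'⟩
  obtain ⟨u, s, hus, huniq⟩ := exists_leaf hac hadj
  have husV : (SimpleGraph.fromEdgeSet (↑T : Set (Sym2 W))).Adj ↑u ↑s := hus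
  have husT : s(↑u, ↑s) ∈ T ∧ (u : W) ≠ ↑s := (SimpleGraph.fromEdgeSet_adj _).mp husV
  refine ⟨↑u, ↑s, husT.2, husT.1, ?_⟩
  intro e heT
  revert heT
  induction e using Sym2.ind with
  | _ x y =>
  intro heT hue
  have hxS : x ∈ S := hS _ heT x (Sym2.mem_mk_left x y)
  have hyS : y ∈ S := hS _ heT y (Sym2.mem_mk_right x y)
  have hxy : x ≠ y := fun hh => hdiag _ heT (by rw [hh]; exact Sym2.mk_isDiag_iff.mpr rfl)
  rcases Sym2.mem_iff.mp hue with hux | huy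
  · -- ↑u = x ; other endpoint y
    have hadj2 : (SimpleGraph.induce (↑S : Set W)
        (SimpleGraph.fromEdgeSet (↑T : Set (Sym2 W)))).Adj u ⟨y, hyS⟩ := by
      show (SimpleGraph.fromEdgeSet (↑T : Set (Sym2 W))).Adj ↑u y
      rw [SimpleGraph.fromEdgeSet_adj]
      rw [← hux] at heT hxy
      exact ⟨heT, hxy⟩
    have := huniq _ hadj2
    have hy' : y = ↑s := congrArg Subtype.val this
    rw [← hux, hy']
  · have hadj2 : (SimpleGraph.induce (↑S : Set W)
        (SimpleGraph.fromEdgeSet (↑T : Set (Sym2 W)))).Adj u ⟨x, hxS⟩ := by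
      show (SimpleGraph.fromEdgeSet (↑T : Set (Sym2 W))).Adj ↑u x
      rw [SimpleGraph.fromEdgeSet_adj]
      rw [← huy] at heT hxy
      rw [Sym2.eq_swap] at heT
      exact ⟨heT, hxy.symm⟩
    have := huniq _ hadj2
    have hx' : x = ↑s := congrArg Subtype.val this
    rw [← huy, hx', Sym2.eq_swap]

end AuxCombinatorics

section AuxMeasure

open scoped ENNReal

variable {W : Type} {X : Type}

/-- `ℝ≥0∞`-valued analogue of `pairApply`. -/
noncomputable def pairE (S : Finset W) (g : X → X → ℝ≥0∞)
    (hg : ∀ a b, g a b = g b a) (y : {v // v ∈ S} → X) : Sym2 W → ℝ≥0∞ :=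
  Sym2.lift ⟨fun u v =>
      if hu : u ∈ S then (if hv : v ∈ S then g (y ⟨u, hu⟩) (y ⟨v, hv⟩) else 0) else 0,
    by
      intro a b
      dsimp only
      by_cases ha : a ∈ S <;> by_cases hb : b ∈ S <;> simp [ha, hb, hg]⟩

lemma pairE_mk (S : Finset W) (g : X → X → ℝ≥0∞) (hg : ∀ a b, g a b = g b a)
    (y : {v // v ∈ S} → X) (u v : W) :
    pairE S g hg y s(u, v) =
      if hu : u ∈ S then (if hv : v ∈ S then g (y ⟨u, hu⟩) (y ⟨v, hv⟩) else 0) else 0 := rfl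

lemma pairApply_mk (S : Finset W) (g : X → X → ℝ) (hg : ∀ a b, g a b = g b a)
    (y : {v // v ∈ S} → X) (u v : W) :
    pairApply S g hg y s(u, v) =
      if hu : u ∈ S then (if hv : v ∈ S then g (y ⟨u, hu⟩) (y ⟨v, hv⟩) else 0) else 0 := rfl

variable [MeasurableSpace X]

lemma measurable_pairE (S : Finset W) (g : X → X → ℝ≥0∞) (hg : ∀ a b, g a b = g b a)
    (hgm : Measurable (Function.uncurry g)) (e : Sym2 W) :
    Measurable (fun y : {v // v ∈ S} → X => pairE S g hg y e) := by
  induction e using Sym2.ind with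
  | _ u v =>
  by_cases hu : u ∈ S
  · by_cases hv : v ∈ S
    · simp only [pairE_mk, dif_pos hu, dif_pos hv]
      have hcoord : Measurable fun y : {v // v ∈ S} → X => (y ⟨u, hu⟩, y ⟨v, hv⟩) :=
        (measurable_pi_apply _).prodMk (measurable_pi_apply _)
      exact hgm.comp hcoord
    · simp only [pairE_mk, dif_pos hu, dif_neg hv]
      exact measurable_const
  · simp only [pairE_mk, dif_neg hu]
    exact measurable_const

lemma measurable_pairApply (S : Finset W) (g : X → X → ℝ) (hg : ∀ a b, g a b = g b a)
    (hgm : Measurable (Function.uncurry g)) (e : Sym2 W) :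
    Measurable (fun y : {v // v ∈ S} → X => pairApply S g hg y e) := by
  induction e using Sym2.ind with
  | _ u v =>
  by_cases hu : u ∈ S
  · by_cases hv : v ∈ S
    · simp only [pairApply_mk, dif_pos hu, dif_pos hv]
      have hcoord : Measurable fun y : {v // v ∈ S} → X => (y ⟨u, hu⟩, y ⟨v, hv⟩) :=
        (measurable_pi_apply _).prodMk (measurable_pi_apply _)
      exact hgm.comp hcoord
    · simp only [pairApply_mk, dif_pos hu, dif_neg hv]
      exact measurable_const
  · simp only [pairApply_mk, dif_neg hu]
    exact measurable_const

lemma pairApply_mem_Icc (S : Finset W) (g : X → X → ℝ) (hg : ∀ a b, g a b = g b a)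
    (hr : ∀ a b, g a b ∈ Set.Icc (0:ℝ) 1) (y : {v // v ∈ S} → X) (e : Sym2 W) :
    pairApply S g hg y e ∈ Set.Icc (0:ℝ) 1 := by
  induction e using Sym2.ind with
  | _ u v =>
  rw [pairApply_mk]
  by_cases hu : u ∈ S
  · by_cases hv : v ∈ S
    · simp only [dif_pos hu, dif_pos hv]; exact hr _ _
    · simp only [dif_pos hu, dif_neg hv]; exact ⟨le_refl _, zero_le_one⟩
  · simp only [dif_neg hu]; exact ⟨le_refl _, zero_le_one⟩

lemma ofReal_pairApply (S : Finset W) (g : X → X → ℝ) (hg : ∀ a b, g a b = g b a)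
    (hg' : ∀ a b, ENNReal.ofReal (g a b) = ENNReal.ofReal (g b a))
    (y : {v // v ∈ S} → X) (e : Sym2 W) :
    ENNReal.ofReal (pairApply S g hg y e) =
      pairE S (fun a b => ENNReal.ofReal (g a b)) hg' y e := by
  induction e using Sym2.ind with
  | _ u v =>
  rw [pairApply_mk, pairE_mk]
  by_cases hu : u ∈ S
  · by_cases hv : v ∈ S
    · simp only [dif_pos hu, dif_pos hv]
    · simp only [dif_pos hu, dif_neg hv, ENNReal.ofReal_zero]
  · simp only [dif_neg hu, ENNReal.ofReal_zero]

lemma pairE_update (S : Finset W) (g : X → X → ℝ≥0∞) (hg : ∀ a b, g a b = g b a)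
    (x : {v // v ∈ S} → X) (vι : {v // v ∈ S}) (xv : X) {e : Sym2 W} (hv : (vι : W) ∉ e) :
    pairE S g hg (Function.update x vι xv) e = pairE S g hg x e := by
  induction e using Sym2.ind with
  | _ a b =>
  have ha : (vι : W) ≠ a := fun hh => hv (by rw [hh]; exact Sym2.mem_mk_left a b)
  have hb : (vι : W) ≠ b := fun hh => hv (by rw [hh]; exact Sym2.mem_mk_right a b)
  rw [pairE_mk, pairE_mk]
  by_cases haS : a ∈ S
  · by_cases hbS : b ∈ S
    · simp only [dif_pos haS, dif_pos hbS]
      rw [Function.update_of_ne (fun hh => ha ((congrArg Subtype.val hh).symm)) xv x,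
        Function.update_of_ne (fun hh => hb ((congrArg Subtype.val hh).symm)) xv x]
    · simp only [dif_pos haS, dif_neg hbS]
  · simp only [dif_neg haS]

end AuxMeasure

section KeyLemma

open scoped ENNReal

lemma key_tree_bound {W X : Type} [Fintype W] [MeasurableSpace X] (μ : Measure X)
    [IsProbabilityMeasure μ] (S : Finset W) (g : X → X → ℝ≥0∞)
    (hgm : Measurable (Function.uncurry g)) (hgs : ∀ a b, g a b = g b a)
    (C : ℝ≥0∞) (hCfin : C ≠ ⊤) (hC : ∀ a, ∫⁻ x, g a x ∂μ ≤ C) :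
    ∀ (n : ℕ) (T : Finset (Sym2 W)) (S' : Finset {v // v ∈ S}), T.card = n →
      (SimpleGraph.induce (↑S : Set W)
        (SimpleGraph.fromEdgeSet (↑T : Set (Sym2 W)))).IsAcyclic →
      (∀ e ∈ T, ¬ e.IsDiag) →
      (∀ e ∈ T, ∀ w ∈ e, w ∈ S) →
      (∀ e ∈ T, ∀ w, ∀ _ : w ∈ e, ∀ h : w ∈ S, (⟨w, h⟩ : {v // v ∈ S}) ∈ S') →
      ∀ y, (∫⋯∫⁻_S', (fun z => ∏ e ∈ T, pairE S g hgs z e) ∂(fun _ => μ)) y ≤ C ^ n := by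
  classical
  intro n
  induction n with
  | zero =>
    intro T S' hcard _ _ _ _ y
    rw [Finset.card_eq_zero] at hcard
    subst hcard
    simp [MeasureTheory.lmarginal]
  | succ n ih =>
    intro T S' hcard hac hdiag hSmem hS' y
    have hne : T.Nonempty := Finset.card_pos.mp (by omega)
    obtain ⟨v, s, hvs, heT, hleaf⟩ := exists_leaf_edge S hac hdiag hSmem hne
    have hvS : v ∈ S := hSmem _ heT v (Sym2.mem_mk_left v s)
    have hsS : s ∈ S := hSmem _ heT s (Sym2.mem_mk_right v s)
    set vι : {v // v ∈ S} := ⟨v, hvS⟩ with hvι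
    have hvS' : vι ∈ S' := hS' _ heT v (Sym2.mem_mk_left v s) hvS
    have hF : Measurable (fun z : {v // v ∈ S} → X => ∏ e ∈ T, pairE S g hgs z e) :=
      Finset.measurable_prod _ (fun e _ => measurable_pairE S g hgs hgm e)
    rw [← Finset.insert_erase hvS',
      MeasureTheory.lmarginal_insert' _ hF (Finset.notMem_erase _ _)]
    have hbound : (fun x => ∫⁻ xv, (∏ e ∈ T, pairE S g hgs (Function.update x vι xv) e) ∂μ)
        ≤ fun x => C * ∏ e ∈ T.erase s(v, s), pairE S g hgs x e := by
      intro x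
      have hstep : ∀ xv, (∏ e ∈ T, pairE S g hgs (Function.update x vι xv) e)
          = g xv (x ⟨s, hsS⟩) * ∏ e ∈ T.erase s(v, s), pairE S g hgs x e := by
        intro xv
        rw [← Finset.mul_prod_erase T _ heT]
        congr 1
        · rw [pairE_mk, dif_pos hvS, dif_pos hsS]
          have h1 : Function.update x vι xv ⟨v, hvS⟩ = xv := Function.update_self _ _ _
          have h2 : Function.update x vι xv ⟨s, hsS⟩ = x ⟨s, hsS⟩ :=
            Function.update_of_ne (fun hh => hvs (congrArg Subtype.val hh).symm) _ _
          rw [h1, h2]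
        · refine Finset.prod_congr rfl (fun e he' => ?_)
          have hv_not : (vι : W) ∉ e := fun hmem =>
            (Finset.mem_erase.mp he').1 (hleaf e (Finset.mem_erase.mp he').2 hmem)
          exact pairE_update S g hgs x vι xv hv_not
      have hgmeas : Measurable (fun xv : X => g xv (x ⟨s, hsS⟩)) := by
        have hcoord : Measurable fun xv : X => (xv, x ⟨s, hsS⟩) :=
          measurable_id.prodMk measurable_const
        exact hgm.comp hcoord
      calc ∫⁻ xv, (∏ e ∈ T, pairE S g hgs (Function.update x vι xv) e) ∂μ
          = ∫⁻ xv, g xv (x ⟨s, hsS⟩) * ∏ e ∈ T.erase s(v, s), pairE S g hgs x e ∂μ := by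
            simp_rw [hstep]
        _ = (∫⁻ xv, g xv (x ⟨s, hsS⟩) ∂μ) * ∏ e ∈ T.erase s(v, s), pairE S g hgs x e :=
            MeasureTheory.lintegral_mul_const _ hgmeas
        _ ≤ C * ∏ e ∈ T.erase s(v, s), pairE S g hgs x e := by
            refine mul_le_mul_left ?_ _
            have heq : (fun xv : X => g xv (x ⟨s, hsS⟩)) = fun xv => g (x ⟨s, hsS⟩) xv :=
              funext fun xv => hgs xv _
            rw [heq]
            exact hC _
    refine le_trans (MeasureTheory.lmarginal_mono hbound y) ?_
    have hsmul : (∫⋯∫⁻_S'.erase vι,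
        (fun x => C * ∏ e ∈ T.erase s(v, s), pairE S g hgs x e) ∂(fun _ => μ)) y
        = C * (∫⋯∫⁻_S'.erase vι,
            (fun x => ∏ e ∈ T.erase s(v, s), pairE S g hgs x e) ∂(fun _ => μ)) y := by
      simp only [MeasureTheory.lmarginal]
      rw [MeasureTheory.lintegral_const_mul' _ _ hCfin]
    rw [hsmul]
    have hIH : (∫⋯∫⁻_S'.erase vι,
        (fun x => ∏ e ∈ T.erase s(v, s), pairE S g hgs x e) ∂(fun _ => μ)) y ≤ C ^ n := by
      refine ih (T.erase s(v, s)) (S'.erase vι) ?_ ?_ ?_ ?_ ?_ y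
      · rw [Finset.card_erase_of_mem heT, hcard]; omega
      · refine isAcyclic_anti (induce_mono_right _ (SimpleGraph.fromEdgeSet_mono ?_)) hac
        exact_mod_cast Finset.coe_subset.mpr (Finset.erase_subset _ _)
      · exact fun e he => hdiag e (Finset.mem_erase.mp he).2
      · exact fun e he => hSmem e (Finset.mem_erase.mp he).2
      · intro e he w hwe hwS
        rcases Finset.mem_erase.mp he with ⟨hene, heT'⟩
        refine Finset.mem_erase.mpr ⟨?_, hS' e heT' w hwe hwS⟩
        intro hh
        have hwv : w = v := congrArg Subtype.val hh
        exact hene (hleaf e heT' (hwv ▸ hwe))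
    calc C * (∫⋯∫⁻_S'.erase vι,
          (fun x => ∏ e ∈ T.erase s(v, s), pairE S g hgs x e) ∂(fun _ => μ)) y
        ≤ C * C ^ n := mul_le_mul_right hIH C
      _ = C ^ (n + 1) := (pow_succ' C n).symm

end KeyLemma

open scoped ENNReal

/-- Let `(X,μ)` be a probability space, `f : X × X → [0,1]`
measurable (and symmetric, so that it makes sense on unordered pairs), and suppose
`∫ (1 − f(x,y)) dμ(y) ≤ c` for every `x`. Then for any tree `T ⊆ E(G)` with broken
edge set `E_T` (relative to `G[V(T)]`),
`|∫_{X^{V(T)}} ∏_{uv∈T}(1−f(x_u,x_v)) ∏_{st∈E_T} f(x_s,x_t) dμ^{V(T)}| ≤ c^{|T|}`. -/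
theorem statement17 (X : Type) [MeasurableSpace X] (μ : Measure X)
    [IsProbabilityMeasure μ] (f : X → X → ℝ) (hmeas : Measurable (Function.uncurry f))
    (hsym : ∀ a b, f a b = f b a) (hrange : ∀ a b, f a b ∈ Set.Icc (0:ℝ) 1)
    (c : ℝ) (hc : c ∈ Set.Icc (0:ℝ) 1) (hint : ∀ a : X, (∫ y, (1 - f a y) ∂μ) ≤ c)
    (V : Type) [Fintype V] (G : SimpleGraph V) (ord : Sym2 V → ℕ)
    (hord : Function.Injective ord) (T : Finset (Sym2 V))
    (hTE : (↑T : Set (Sym2 V)) ⊆ G.edgeSet) (hT : IsTreeSet T) :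
    |∫ y : {v // v ∈ verts T} → X,
        (∏ e ∈ T, pairApply (verts T) (fun a b => 1 - f a b)
            (fun a b => by rw [hsym a b]) y e) *
          ∏ e ∈ brokenEdgesOn G ord (verts T) T, pairApply (verts T) f hsym y e
      ∂(Measure.pi (fun _ => μ))| ≤ c ^ T.card := by
  classical
  have hXne : Nonempty X := by
    by_contra h
    have hE : IsEmpty X := not_nonempty_iff.mp h
    have h0 : μ Set.univ = 0 := by
      rw [Set.univ_eq_empty_iff.mpr hE]; exact measure_empty
    rw [measure_univ] at h0
    exact one_ne_zero h0
  have hsym1 : ∀ a b : X, (1:ℝ) - f a b = 1 - f b a := fun a b => by rw [hsym a b]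
  set F1 : ({v // v ∈ verts T} → X) → ℝ :=
    fun y => ∏ e ∈ T, pairApply (verts T) (fun a b => 1 - f a b)
      (fun a b => by rw [hsym a b]) y e with hF1
  set F2 : ({v // v ∈ verts T} → X) → ℝ :=
    fun y => ∏ e ∈ brokenEdgesOn G ord (verts T) T, pairApply (verts T) f hsym y e with hF2
  show |∫ y, F1 y * F2 y ∂(Measure.pi (fun _ => μ))| ≤ c ^ T.card
  have hm1 : Measurable (Function.uncurry (fun a b : X => (1:ℝ) - f a b)) := by
    have heq : Function.uncurry (fun a b : X => (1:ℝ) - f a b)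
        = fun p => 1 - Function.uncurry f p := rfl
    rw [heq]
    exact measurable_const.sub hmeas
  have hr1 : ∀ a b : X, (1:ℝ) - f a b ∈ Set.Icc (0:ℝ) 1 := fun a b =>
    ⟨sub_nonneg.mpr (hrange a b).2, by have := (hrange a b).1; linarith⟩
  have hnon : ∀ y, 0 ≤ F1 y * F2 y := by
    intro y
    refine mul_nonneg (Finset.prod_nonneg fun e _ => ?_) (Finset.prod_nonneg fun e _ => ?_)
    · exact (pairApply_mem_Icc _ _ _ hr1 y e).1
    · exact (pairApply_mem_Icc _ _ _ hrange y e).1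
  have hmF : Measurable (fun y => F1 y * F2 y) := by
    refine Measurable.mul ?_ ?_
    · exact Finset.measurable_prod _ fun e _ => measurable_pairApply _ _ _ hm1 e
    · exact Finset.measurable_prod _ fun e _ => measurable_pairApply _ _ _ hmeas e
  rw [MeasureTheory.integral_eq_lintegral_of_nonneg_ae
      (Filter.Eventually.of_forall hnon) hmF.aestronglyMeasurable,
    abs_of_nonneg ENNReal.toReal_nonneg]
  set gE : X → X → ℝ≥0∞ := fun a b => ENNReal.ofReal (1 - f a b) with hgE
  have hgEs : ∀ a b, gE a b = gE b a := fun a b => by rw [hgE]; dsimp only; rw [hsym1]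
  have hgEm : Measurable (Function.uncurry gE) := by
    have heq : Function.uncurry gE
        = fun p => ENNReal.ofReal (Function.uncurry (fun a b : X => (1:ℝ) - f a b) p) := rfl
    rw [heq]
    exact ENNReal.measurable_ofReal.comp hm1
  have hCb : ∀ a, ∫⁻ x, gE a x ∂μ ≤ ENNReal.ofReal c := by
    intro a
    have hma : Measurable fun x : X => (1:ℝ) - f a x := by
      refine measurable_const.sub ?_
      exact hmeas.comp (measurable_const.prodMk measurable_id)
    have hia : MeasureTheory.Integrable (fun x => (1:ℝ) - f a x) μ := by
      refine (MeasureTheory.integrable_const (1:ℝ)).mono' hma.aestronglyMeasurable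
        (Filter.Eventually.of_forall fun x => ?_)
      rw [Real.norm_eq_abs, abs_of_nonneg (sub_nonneg.mpr (hrange a x).2)]
      have := (hrange a x).1; linarith
    have hkey := MeasureTheory.ofReal_integral_eq_lintegral_ofReal hia
      (Filter.Eventually.of_forall fun x => sub_nonneg.mpr (hrange a x).2)
    calc ∫⁻ x, gE a x ∂μ = ENNReal.ofReal (∫ x, (1 - f a x) ∂μ) := hkey.symm
      _ ≤ ENNReal.ofReal c := ENNReal.ofReal_le_ofReal (hint a)
  have hdiag : ∀ e ∈ T, ¬ e.IsDiag := fun e he => G.not_isDiag_of_mem_edgeSet (hTE he)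
  have hSmem : ∀ e ∈ T, ∀ w ∈ e, w ∈ verts T := by
    intro e he w hw
    simp only [verts, Finset.mem_filter]
    exact ⟨Finset.mem_univ _, e, he, hw⟩
  have hT' : (SimpleGraph.induce (↑(verts T) : Set V)
      (SimpleGraph.fromEdgeSet (↑T : Set (Sym2 V)))).IsTree := hT
  set x₀ : {v // v ∈ verts T} → X := fun _ => Classical.arbitrary X with hx₀
  have hpt : ∀ y, ENNReal.ofReal (F1 y * F2 y) ≤ ∏ e ∈ T, pairE (verts T) gE hgEs y e := by
    intro y
    have h1 : F1 y * F2 y ≤ F1 y := by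
      refine mul_le_of_le_one_right (Finset.prod_nonneg fun e _ =>
        (pairApply_mem_Icc _ _ _ hr1 y e).1) ?_
      exact Finset.prod_le_one (fun e _ => (pairApply_mem_Icc _ _ _ hrange y e).1)
        (fun e _ => (pairApply_mem_Icc _ _ _ hrange y e).2)
    refine le_trans (ENNReal.ofReal_le_ofReal h1) ?_
    rw [hF1]
    rw [ENNReal.ofReal_prod_of_nonneg (fun e _ => (pairApply_mem_Icc _ _ _ hr1 y e).1)]
    refine le_of_eq (Finset.prod_congr rfl fun e _ => ?_)
    exact ofReal_pairApply (verts T) (fun a b => 1 - f a b) _ hgEs y e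
  have hlin : ∫⁻ y, ENNReal.ofReal (F1 y * F2 y) ∂(Measure.pi fun _ => μ)
      ≤ ENNReal.ofReal c ^ T.card := by
    refine le_trans (MeasureTheory.lintegral_mono hpt) ?_
    rw [MeasureTheory.lintegral_eq_lmarginal_univ x₀]
    exact key_tree_bound μ (verts T) gE hgEm hgEs (ENNReal.ofReal c) ENNReal.ofReal_ne_top
      hCb T.card T Finset.univ rfl hT'.IsAcyclic hdiag hSmem
      (fun _ _ _ _ h => Finset.mem_univ _) x₀
  calc (∫⁻ y, ENNReal.ofReal (F1 y * F2 y) ∂(Measure.pi fun _ => μ)).toReal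
      ≤ (ENNReal.ofReal c ^ T.card).toReal :=
        ENNReal.toReal_mono (ENNReal.pow_ne_top ENNReal.ofReal_ne_top) hlin
    _ = c ^ T.card := by rw [ENNReal.toReal_pow, ENNReal.toReal_ofReal hc.1]


end VolumePaper
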